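/- Let Ψ : ℝ × ℝ → ℝ be C² and h : ℝ → ℝ be C¹. Define F by F_{01} = h(Ψ), F_{02} = ∂ₜΨ, F_{12} = ∂ₓΨ (antisymmetric, other components zero), and J^μ = ∂_ν F^{νμ} with indices raised by η = diag(−1,1,1,1). Then at each point (t,x), the force-free condition F_{μν} J^ν = 0 (for all μ) holds if and only if both (∂ₜₜΨ − ∂ₓₓΨ + h(Ψ)h'(Ψ))·∂ₜΨ = 0 and (∂ₜₜΨ − ∂ₓₓΨ + h(Ψ)h'(Ψ))·∂ₓΨ = 0 hold at that point. -/

import Mathlib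

noncomputable section

/-- `∂ₜΨ`. -/
def psiT (Ψ : ℝ × ℝ → ℝ) (t x : ℝ) : ℝ := deriv (fun s => Ψ (s, x)) t

/-- `∂ₓΨ`. -/
def psiX (Ψ : ℝ × ℝ → ℝ) (t x : ℝ) : ℝ := deriv (fun s => Ψ (t, s)) x

/-- `∂ₜₜΨ`. -/
def psiTT (Ψ : ℝ × ℝ → ℝ) (t x : ℝ) : ℝ := deriv (fun s => psiT Ψ s x) t

/-- `∂ₓₓΨ`. -/
def psiXX (Ψ : ℝ × ℝ → ℝ) (t x : ℝ) : ℝ := deriv (fun s => psiX Ψ t s) x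

/-- The antisymmetric field tensor `F_{μν}` of the ansatz
`F = dΨ ∧ dy + h(Ψ) dt ∧ dx`, with `F_{01} = h(Ψ)`, `F_{02} = ∂ₜΨ`, `F_{12} = ∂ₓΨ`. -/
def Fdown (Ψ : ℝ × ℝ → ℝ) (h : ℝ → ℝ) (p : Fin 4 → ℝ) : Matrix (Fin 4) (Fin 4) ℝ :=
  !![0, h (Ψ (p 0, p 1)), psiT Ψ (p 0) (p 1), 0;
     -(h (Ψ (p 0, p 1))), 0, psiX Ψ (p 0) (p 1), 0;
     -(psiT Ψ (p 0) (p 1)), -(psiX Ψ (p 0) (p 1)), 0, 0;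
     0, 0, 0, 0]

/-- The Minkowski metric `η = diag(-1,1,1,1)`. -/
def eta : Matrix (Fin 4) (Fin 4) ℝ := Matrix.diagonal ![-1, 1, 1, 1]

/-- `F^{νμ} = η^{να} η^{μβ} F_{αβ}` (indices raised with `η`). -/
def Fup (Ψ : ℝ × ℝ → ℝ) (h : ℝ → ℝ) (p : Fin 4 → ℝ) : Matrix (Fin 4) (Fin 4) ℝ :=
  fun ν μ => ∑ α : Fin 4, ∑ β : Fin 4, eta ν α * eta μ β * Fdown Ψ h p α β

/-- Coordinate partial derivative `∂_ν f` on ℝ⁴. -/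
def pd (ν : Fin 4) (f : (Fin 4 → ℝ) → ℝ) (p : Fin 4 → ℝ) : ℝ :=
  deriv (fun s => f (Function.update p ν s)) (p ν)

/-- The four-current `J^μ = ∂_ν F^{νμ}`. -/
def Jcur (Ψ : ℝ × ℝ → ℝ) (h : ℝ → ℝ) (p : Fin 4 → ℝ) (μ : Fin 4) : ℝ :=
  ∑ ν : Fin 4, pd ν (fun q => Fup Ψ h q ν μ) p


lemma Fup_eq (Ψ : ℝ × ℝ → ℝ) (h : ℝ → ℝ) (q : Fin 4 → ℝ) :
    Fup Ψ h q = !![0, -(h (Ψ (q 0, q 1))), -(psiT Ψ (q 0) (q 1)), 0;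
     h (Ψ (q 0, q 1)), 0, psiX Ψ (q 0) (q 1), 0;
     psiT Ψ (q 0) (q 1), -(psiX Ψ (q 0) (q 1)), 0, 0;
     0, 0, 0, 0] := by
  funext ν μ
  fin_cases ν <;> fin_cases μ <;>
    simp [Fup, eta, Fdown, Fin.sum_univ_four, Matrix.diagonal, Matrix.vecHead, Matrix.vecTail]

lemma derivT (Ψ : ℝ × ℝ → ℝ) (h : ℝ → ℝ) (hΨ : ContDiff ℝ 2 Ψ) (hh : ContDiff ℝ 1 h)
    (t x : ℝ) :
    deriv (fun s => h (Ψ (s, x))) t = deriv h (Ψ (t, x)) * psiT Ψ t x := by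
  have hΨd : Differentiable ℝ Ψ := hΨ.differentiable (by norm_num)
  have hg : DifferentiableAt ℝ (fun s => Ψ (s, x)) t :=
    (hΨd.comp (differentiable_id.prodMk (differentiable_const x))).differentiableAt
  rw [show (fun s => h (Ψ (s, x))) = h ∘ (fun s => Ψ (s, x)) from rfl,
    deriv_comp _ (hh.differentiable one_ne_zero _) hg]
  rfl

lemma derivX (Ψ : ℝ × ℝ → ℝ) (h : ℝ → ℝ) (hΨ : ContDiff ℝ 2 Ψ) (hh : ContDiff ℝ 1 h)
    (t x : ℝ) :
    deriv (fun s => h (Ψ (t, s))) x = deriv h (Ψ (t, x)) * psiX Ψ t x := by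
  have hΨd : Differentiable ℝ Ψ := hΨ.differentiable (by norm_num)
  have hg : DifferentiableAt ℝ (fun s => Ψ (t, s)) x :=
    (hΨd.comp ((differentiable_const t).prodMk differentiable_id)).differentiableAt
  rw [show (fun s => h (Ψ (t, s))) = h ∘ (fun s => Ψ (t, s)) from rfl,
    deriv_comp _ (hh.differentiable one_ne_zero _) hg]
  rfl

lemma J0 (Ψ : ℝ × ℝ → ℝ) (h : ℝ → ℝ) (p : Fin 4 → ℝ)
    (hΨ : ContDiff ℝ 2 Ψ) (hh : ContDiff ℝ 1 h) :
    Jcur Ψ h p 0 = deriv h (Ψ (p 0, p 1)) * psiX Ψ (p 0) (p 1) := by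
  simp only [Jcur, Fin.sum_univ_four, pd, Fup_eq]
  simp [Function.update, Fin.ext_iff, derivX Ψ h hΨ hh]

lemma J1 (Ψ : ℝ × ℝ → ℝ) (h : ℝ → ℝ) (p : Fin 4 → ℝ)
    (hΨ : ContDiff ℝ 2 Ψ) (hh : ContDiff ℝ 1 h) :
    Jcur Ψ h p 1 = -(deriv h (Ψ (p 0, p 1)) * psiT Ψ (p 0) (p 1)) := by
  simp only [Jcur, Fin.sum_univ_four, pd, Fup_eq]
  simp [Function.update, Fin.ext_iff, derivT Ψ h hΨ hh]

lemma J2 (Ψ : ℝ × ℝ → ℝ) (h : ℝ → ℝ) (p : Fin 4 → ℝ) :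
    Jcur Ψ h p 2 = psiXX Ψ (p 0) (p 1) - psiTT Ψ (p 0) (p 1) := by
  simp only [Jcur, Fin.sum_univ_four, pd, Fup_eq]
  simp [Function.update, Fin.ext_iff, psiTT, psiXX]
  ring

lemma J3 (Ψ : ℝ × ℝ → ℝ) (h : ℝ → ℝ) (p : Fin 4 → ℝ) : Jcur Ψ h p 3 = 0 := by
  simp only [Jcur, Fin.sum_univ_four, pd, Fup_eq]
  simp [Function.update, Fin.ext_iff]

/-- the force-free condition `F_{μν} J^ν = 0` (for all `μ`) holds at a point
iff `(∂ₜₜΨ − ∂ₓₓΨ + h(Ψ)h'(Ψ))·∂ₜΨ = 0` and `(∂ₜₜΨ − ∂ₓₓΨ + h(Ψ)h'(Ψ))·∂ₓΨ = 0` there. -/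
theorem stmt2 (Ψ : ℝ × ℝ → ℝ) (h : ℝ → ℝ)
    (hΨ : ContDiff ℝ 2 Ψ) (hh : ContDiff ℝ 1 h) (p : Fin 4 → ℝ) :
    (∀ μ : Fin 4, ∑ ν : Fin 4, Fdown Ψ h p μ ν * Jcur Ψ h p ν = 0) ↔
      ((psiTT Ψ (p 0) (p 1) - psiXX Ψ (p 0) (p 1)
          + h (Ψ (p 0, p 1)) * deriv h (Ψ (p 0, p 1))) * psiT Ψ (p 0) (p 1) = 0 ∧
       (psiTT Ψ (p 0) (p 1) - psiXX Ψ (p 0) (p 1)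
          + h (Ψ (p 0, p 1)) * deriv h (Ψ (p 0, p 1))) * psiX Ψ (p 0) (p 1) = 0) := by
  have hJ0 := J0 Ψ h p hΨ hh
  have hJ1 := J1 Ψ h p hΨ hh
  have hJ2 := J2 Ψ h p
  have hJ3 := J3 Ψ h p
  constructor
  · intro H
    have H0 := H 0
    have H1 := H 1
    simp [Fin.sum_univ_four, Fdown, hJ0, hJ1, hJ2, hJ3] at H0 H1
    constructor <;> nlinarith [H0, H1]
  · rintro ⟨h1, h2⟩ μ
    fin_cases μ <;>
      simp [Fin.sum_univ_four, Fdown, hJ0, hJ1, hJ2, hJ3] <;>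
      nlinarith [h1, h2]
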